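/- Let ζ be a complex number with |ζ|² − 1 = |S|^{-2} for some nonzero complex S, and define δ_0 = 1, γ_0 = ζ, with the recursion γ_{n+1} = ζ γ_n + conj(δ_n), δ_{n+1} = ζ δ_n + conj(γ_n). Then δ_n satisfies the second-order linear recurrence δ_{n+2} − (ζ + conj(ζ)) δ_{n+1} + (|ζ|² − 1) δ_n = 0, and consequently δ_n = (|ζ|² − 1)^{n/2} U_n( (ζ + conj(ζ)) / (2√(|ζ|²−1)) ), where U_n is the Chebyshev polynomial of the second kind. -/

import Mathlib

open Complex Polynomial

/-- The recursion coefficients `δ_n` satisfy a Chebyshev-type second-order recurrence and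
are given by Chebyshev polynomials of the second kind. -/
theorem delta_chebyshev (S ζ : ℂ) (hS : S ≠ 0)
    (hζ : ‖ζ‖ ^ 2 - 1 = (‖S‖ ^ 2)⁻¹)
    (γ δ : ℕ → ℂ)
    (hδ0 : δ 0 = 1) (hγ0 : γ 0 = ζ)
    (hγ : ∀ n, γ (n + 1) = ζ * γ n + (starRingEnd ℂ) (δ n))
    (hδ : ∀ n, δ (n + 1) = ζ * δ n + (starRingEnd ℂ) (γ n)) :
    (∀ n, δ (n + 2) - (ζ + (starRingEnd ℂ) ζ) * δ (n + 1)
        + ((‖ζ‖ ^ 2 - 1 : ℝ) : ℂ) * δ n = 0) ∧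
    (∀ n : ℕ, δ n = ((Real.sqrt (‖ζ‖ ^ 2 - 1) : ℝ) : ℂ) ^ n *
        (Polynomial.Chebyshev.U ℂ n).eval
          ((ζ + (starRingEnd ℂ) ζ) / (2 * ((Real.sqrt (‖ζ‖ ^ 2 - 1) : ℝ) : ℂ)))) := by
  have hpos : (0 : ℝ) < ‖ζ‖ ^ 2 - 1 := by
    rw [hζ]
    have : 0 < ‖S‖ := norm_pos_iff.mpr hS
    positivity
  set r : ℂ := ((Real.sqrt (‖ζ‖ ^ 2 - 1) : ℝ) : ℂ) with hr
  have hr2 : r ^ 2 = ((‖ζ‖ : ℂ)) ^ 2 - 1 := by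
    rw [hr, ← Complex.ofReal_pow, Real.sq_sqrt hpos.le]
    push_cast
    ring
  have hrne : r ≠ 0 := by
    rw [hr]
    exact_mod_cast Real.sqrt_ne_zero'.mpr hpos
  have hmul : ζ * (starRingEnd ℂ) ζ = ((‖ζ‖ : ℂ)) ^ 2 := by
    rw [Complex.mul_conj]
    push_cast [← Complex.sq_norm]
    norm_num
  have hrec : ∀ n, δ (n + 2) - (ζ + (starRingEnd ℂ) ζ) * δ (n + 1)
      + ((‖ζ‖ ^ 2 - 1 : ℝ) : ℂ) * δ n = 0 := by
    intro n
    have h1 : (starRingEnd ℂ) (γ n) = δ (n + 1) - ζ * δ n := by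
      rw [hδ n]; ring
    have h2 : δ (n + 2) = ζ * δ (n + 1) + (starRingEnd ℂ) ζ * (starRingEnd ℂ) (γ n) + δ n := by
      rw [hδ (n + 1), hγ n, map_add, map_mul, Complex.conj_conj]
      ring
    rw [h2, h1]
    push_cast
    linear_combination (-(δ n)) * hmul
  refine ⟨hrec, ?_⟩
  set x : ℂ := (ζ + (starRingEnd ℂ) ζ) / (2 * r) with hx
  have hcx : ζ + (starRingEnd ℂ) ζ = 2 * r * x := by
    rw [hx]; field_simp
  have key : ∀ n : ℕ, δ n = r ^ n * (Polynomial.Chebyshev.U ℂ n).eval x ∧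
      δ (n + 1) = r ^ (n + 1) * (Polynomial.Chebyshev.U ℂ (n + 1)).eval x := by
    intro n
    induction n with
    | zero =>
      constructor
      · simp [hδ0, Polynomial.Chebyshev.U_zero]
      · rw [hδ 0, hδ0, hγ0]
        have : ((0 : ℕ) + 1 : ℤ) = 1 := by norm_num
        rw [this, Polynomial.Chebyshev.U_one]
        simp only [eval_mul, eval_ofNat, eval_X, pow_one]
        linear_combination hcx
    | succ n ih =>
      refine ⟨ih.2, ?_⟩
      have h3 : δ (n + 2) = (ζ + (starRingEnd ℂ) ζ) * δ (n + 1)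
          - ((‖ζ‖ ^ 2 - 1 : ℝ) : ℂ) * δ n := by
        linear_combination hrec n
      rw [h3, ih.1, ih.2]
      have hU : Polynomial.Chebyshev.U ℂ ((n : ℤ) + 1 + 1) =
          2 * X * Polynomial.Chebyshev.U ℂ ((n : ℤ) + 1) - Polynomial.Chebyshev.U ℂ n :=
        Polynomial.Chebyshev.U_add_two ℂ n
      push_cast
      rw [hU]
      simp only [eval_sub, eval_mul, eval_ofNat, eval_X]
      linear_combination (r ^ n * (Polynomial.Chebyshev.U ℂ (n : ℤ)).eval x) * hr2 +
        (r ^ (n + 1) * (Polynomial.Chebyshev.U ℂ ((n : ℤ) + 1)).eval x) * hcx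
  intro n
  exact (key n).1
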